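/- For all real numbers a, b with 0 < a < b, the integral ∫_a^b (w/(1+w))·e^{w/2} dw satisfies (1/12)·e^{b/2}·min(1,b)·min(1,b-a) ≤ ∫_a^b (w/(1+w))·e^{w/2} dw ≤ 2·e^{b/2}·min(1,b)·min(1,b-a). -/

import Mathlib

open Real

theorem stmt0 (a b : ℝ) (ha : 0 < a) (hab : a < b) :
    (1/12) * Real.exp (b/2) * min 1 b * min 1 (b - a) ≤
      ∫ w in a..b, (w / (1 + w)) * Real.exp (w/2) ∧
    ∫ w in a..b, (w / (1 + w)) * Real.exp (w/2) ≤
      2 * Real.exp (b/2) * min 1 b * min 1 (b - a) := by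
  have hb : 0 < b := ha.trans hab
  set f : ℝ → ℝ := fun w => (w / (1 + w)) * Real.exp (w/2) with hf
  have hcont : ContinuousOn f (Set.Ici 0) := by
    apply ContinuousOn.mul
    · exact ContinuousOn.div continuousOn_id (by fun_prop)
        (fun x hx => by have : (0:ℝ) ≤ x := hx; positivity)
    · fun_prop
  have hintgen : ∀ u v : ℝ, 0 ≤ u → 0 ≤ v →
      IntervalIntegrable f MeasureTheory.volume u v := by
    intro u v hu hv
    apply (hcont.mono ?_).intervalIntegrable
    intro x hx
    rcases Set.mem_uIcc.1 hx with h | h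
    · exact le_trans hu h.1
    · exact le_trans hv h.1
  -- setup for lower bound
  set m : ℝ := min 1 (b - a) / 2 with hm
  have hm0 : 0 < m := by
    have : 0 < min 1 (b - a) := lt_min one_pos (by linarith)
    positivity
  have hm1 : m ≤ (b - a) / 2 := by
    have := min_le_right 1 (b - a); simp [hm]; linarith
  have hmhalf : m ≤ 1 / 2 := by
    have := min_le_left 1 (b - a); simp [hm]; linarith
  set c : ℝ := b - m with hc
  have hac : a ≤ c := by simp [hc]; linarith
  have hcb : c ≤ b := by simp [hc]; linarith
  have hc0 : 0 < c := lt_of_lt_of_le ha hac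
  have hcbig : b / 2 ≤ c := by simp [hc]; linarith
  -- the constant lower bound on [c, b]
  set K : ℝ := min 1 b / 3 * (Real.exp (b / 2) / 2) with hK
  have hpoint : ∀ w ∈ Set.Icc c b, K ≤ f w := by
    intro w hw
    have hw1 : b / 2 ≤ w := le_trans hcbig hw.1
    have hw0 : 0 < w := lt_of_lt_of_le (by linarith) hw1
    have hwb : w ≤ b := hw.2
    have h1 : min 1 b / 3 ≤ w / (1 + w) := by
      rw [div_le_div_iff₀ (by norm_num) (by linarith)]
      rcases min_cases 1 b with ⟨h, hb1⟩ | ⟨h, hb1⟩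
      · rw [h]; nlinarith
      · rw [h]; nlinarith
    have h2 : Real.exp (b / 2) / 2 ≤ Real.exp (w / 2) := by
      have hwc : b - 1/2 ≤ w := by
        have := hw.1; simp [hc] at this; linarith
      have he : Real.exp (b / 2) / 2 ≤ Real.exp (b / 2 - 1 / 4) := by
        rw [Real.exp_sub, div_le_div_iff₀ (by norm_num) (Real.exp_pos _)]
        have hl : Real.exp (1/4 : ℝ) < 2 := by
          have : (1/4 : ℝ) < Real.log 2 := by
            have := Real.log_two_gt_d9; linarith
          calc Real.exp (1/4 : ℝ) < Real.exp (Real.log 2) := Real.exp_lt_exp.2 this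
            _ = 2 := Real.exp_log (by norm_num)
        nlinarith [Real.exp_pos (b/2)]
      exact le_trans he (Real.exp_le_exp.2 (by linarith))
    have : min 1 b / 3 * (Real.exp (b/2) / 2) ≤ (w / (1 + w)) * Real.exp (w/2) := by
      apply mul_le_mul h1 h2 (by positivity) (by positivity)
    simpa [hK, hf] using this
  have hKpos : 0 < K := by
    have : 0 < min 1 b := lt_min one_pos hb
    positivity
  -- lower bound
  have hlow : (1/12) * Real.exp (b/2) * min 1 b * min 1 (b - a) ≤ ∫ w in a..b, f w := by
    have hsplit : (∫ w in a..c, f w) + (∫ w in c..b, f w) = ∫ w in a..b, f w :=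
      intervalIntegral.integral_add_adjacent_intervals
        (hintgen a c ha.le hc0.le) (hintgen c b hc0.le hb.le)
    have h1 : 0 ≤ ∫ w in a..c, f w := by
      apply intervalIntegral.integral_nonneg hac
      intro x hx
      have hx0 : 0 < x := lt_of_lt_of_le ha hx.1
      have : 0 ≤ x / (1 + x) := by positivity
      simp only [hf]
      positivity
    have h2 : K * (b - c) ≤ ∫ w in c..b, f w := by
      have h := intervalIntegral.integral_mono_on hcb
        (intervalIntegrable_const (c := K)) (hintgen c b hc0.le hb.le) hpoint
      rw [intervalIntegral.integral_const, smul_eq_mul, mul_comm] at h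
      exact h
    have hbc : b - c = m := by simp [hc]
    have : K * m ≤ ∫ w in a..b, f w := by
      rw [← hsplit]; rw [hbc] at h2; linarith
    calc (1/12) * Real.exp (b/2) * min 1 b * min 1 (b - a)
        = K * m := by rw [hK, hm]; ring
      _ ≤ _ := this
  -- upper bound
  have hup : (∫ w in a..b, f w) ≤ 2 * Real.exp (b/2) * min 1 b * min 1 (b - a) := by
    set M : ℝ := min 1 b with hM
    have hMpos : 0 < M := lt_min one_pos hb
    have hpt : ∀ w ∈ Set.Icc a b, f w ≤ M * Real.exp (w/2) := by
      intro w hw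
      have hw0 : 0 < w := lt_of_lt_of_le ha hw.1
      have hdiv : w / (1 + w) ≤ M := by
        rcases min_cases 1 b with ⟨h, hb1⟩ | ⟨h, hb1⟩
        · rw [hM, h, div_le_one (by linarith)]; linarith
        · rw [hM, h, div_le_iff₀ (by linarith)]
          nlinarith [hw.2]
      simp only [hf]
      exact mul_le_mul_of_nonneg_right hdiv (Real.exp_pos _).le
    have hexpint : (∫ w in a..b, Real.exp (w/2)) = 2 * Real.exp (b/2) - 2 * Real.exp (a/2) := by
      have hderiv : ∀ x ∈ Set.uIcc a b, HasDerivAt (fun w => 2 * Real.exp (w/2))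
          (Real.exp (x/2)) x := by
        intro x _
        have h1 : HasDerivAt (fun w : ℝ => w / 2) (1/2) x := by
          simpa using (hasDerivAt_id x).div_const 2
        have h2 := (h1.exp).const_mul 2
        exact h2.congr_deriv (by ring)
      rw [intervalIntegral.integral_eq_sub_of_hasDerivAt hderiv
        ((Real.continuous_exp.comp (continuous_id.div_const 2)).intervalIntegrable a b)]
    have hmono : (∫ w in a..b, f w) ≤ ∫ w in a..b, M * Real.exp (w/2) :=
      intervalIntegral.integral_mono_on hab.le (hintgen a b ha.le hb.le)
        (((Real.continuous_exp.comp (continuous_id.div_const 2)).const_smul M).intervalIntegrable a b)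
        hpt
    have hexpint2 : (∫ w in a..b, M * Real.exp (w/2))
        = M * (2 * Real.exp (b/2) - 2 * Real.exp (a/2)) := by
      rw [← hexpint, ← intervalIntegral.integral_const_mul]
    have hkey : 2 * Real.exp (b/2) - 2 * Real.exp (a/2) ≤ 2 * Real.exp (b/2) * min 1 (b - a) := by
      rcases min_cases 1 (b - a) with ⟨h, hba⟩ | ⟨h, hba⟩
      · rw [h]; nlinarith [Real.exp_pos (a/2)]
      · rw [h]
        have h1 : (a - b)/2 + 1 ≤ Real.exp ((a - b)/2) := Real.add_one_le_exp _
        have h2 : Real.exp (a/2) = Real.exp (b/2) * Real.exp ((a-b)/2) := by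
          rw [← Real.exp_add]; ring_nf
        nlinarith [Real.exp_pos (b/2)]
    calc (∫ w in a..b, f w) ≤ M * (2 * Real.exp (b/2) - 2 * Real.exp (a/2)) := by
          rw [← hexpint2]; exact hmono
      _ ≤ M * (2 * Real.exp (b/2) * min 1 (b - a)) :=
          mul_le_mul_of_nonneg_left hkey hMpos.le
      _ = 2 * Real.exp (b/2) * min 1 b * min 1 (b - a) := by rw [hM]; ring
  exact ⟨hlow, hup⟩
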